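/- arXiv:1206.5977 — 2 statements merged into one kernel-verified Lean document; each statement's English description precedes it below -/
import Mathlib

section
/- Let α > 0 and β be real numbers with α ≠ 1, and suppose that α, (α^2 β + 1)/α, and (α^3 + β)/α are all integers. Then there is no such pair (α, β); more precisely, the hypotheses α ∈ ℤ, β + 1/α ∈ ℤ, α^2 + β/α ∈ ℤ, α > 0, α ≠ 1 are contradictory. -/
/-!
STATEMENT 3: Let α > 0 and β be real with α ≠ 1, and suppose α, (α²β + 1)/α and
(α³ + β)/α are all integers.  Then there is no such pair (α, β): the hypotheses are
contradictory.  (These are the coefficients of the minimal polynomial of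
exp(2πs₂ ad_{X₆}) for G_{6.11}^{a,p,q,s}; α = 1 corresponds to the excluded value
a = p + q = 0.  This proves Γ_{2πs₂} is never a lattice.)
-/

theorem no_lattice_g611 (α β : ℝ) (hα : 0 < α) (hα1 : α ≠ 1)
    (h1 : ∃ a : ℤ, α = (a : ℝ))
    (h2 : ∃ b : ℤ, (α ^ 2 * β + 1) / α = (b : ℝ))
    (h3 : ∃ c : ℤ, (α ^ 3 + β) / α = (c : ℝ)) :
    False := by
  obtain ⟨a, ha⟩ := h1
  obtain ⟨b, hb⟩ := h2
  obtain ⟨c, hc⟩ := h3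
  have hαne : α ≠ 0 := ne_of_gt hα
  have hb' : α ^ 2 * β + 1 = b * α := by
    field_simp at hb; linarith
  have hc' : α ^ 3 + β = c * α := by
    field_simp at hc; linarith
  have hβ : β = c * α - α ^ 3 := by linarith
  have key : (1 : ℝ) = b * α - c * α ^ 3 + α ^ 5 := by
    have := hb'
    rw [hβ] at this
    ring_nf at this ⊢
    nlinarith [this]
  rw [ha] at key
  have keyz : (1 : ℤ) = b * a - c * a ^ 3 + a ^ 5 := by
    exact_mod_cast key
  have hdvd : a ∣ 1 := ⟨b - c * a ^ 2 + a ^ 4, by linarith [keyz, mul_comm a (b - c * a ^ 2 + a ^ 4)]⟩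
  have ha0 : 0 < a := by exact_mod_cast ha ▸ hα
  have ha1 : a = 1 := Int.eq_one_of_dvd_one ha0.le hdvd
  exact hα1 (by rw [ha, ha1]; norm_num)
end

section
/- Consider the 6-dimensional real Lie algebra g̃ with basis X₁,…,X₆ and only nonzero bracket [X₂, X₆] = X₁ (so g̃ ≅ g_{3.1} ⊕ ℝ³, the Heisenberg algebra times ℝ³). Its Chevalley–Eilenberg cohomology has Betti numbers b₁ = 5, b₂ = 11, b₃ = 14. -/
/-!
STATEMENT 8: The 6-dimensional real Lie algebra g̃ with basis X₁,…,X₆ and only nonzero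
bracket [X₂,X₆] = X₁ (≅ g_{3.1} ⊕ ℝ³) has Chevalley–Eilenberg Betti numbers
b₁ = 5, b₂ = 11, b₃ = 14.

We model the Chevalley–Eilenberg complex concretely: the exterior algebra Λ(α¹,…,α⁶)
on the dual basis is realized as `Lam := Finset (Fin 6) → ℝ` (coordinates with respect to
the basis α^S = α^{s₁} ∧ ⋯ ∧ α^{s_k}, s₁ < ⋯ < s_k, for S = {s₁,…,s_k}); `wedge` is the
exterior product, and the CE differential is the antiderivation `ceDiff g` determined by
its values `g i = dαⁱ` on the degree-one generators, extended by the graded Leibniz rule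
d(αⁱ ∧ ω) = dαⁱ ∧ ω − αⁱ ∧ dω.  Here dα¹ = −α²∧α⁶ (from dα(X,Y) = −α([X,Y])) and
dαⁱ = 0 for i ≠ 1.  The k-th Betti number is
dim(ker d ∩ Λᵏ) − dim d(Λᵏ⁻¹).
-/

open Finset Module

/-- The exterior algebra on six degree-one generators α¹,…,α⁶, as coordinates on the
basis of increasing wedge monomials indexed by subsets of `Fin 6`. -/
abbrev Lam : Type := Finset (Fin 6) → ℝ

/-- The basis monomial α^S. -/
noncomputable def gen (S : Finset (Fin 6)) : Lam := Pi.single S 1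

/-- Koszul sign when interleaving (the increasing enumerations of) `T` and `U`:
(−1) to the number of inversions. -/
def koszulSign (T U : Finset (Fin 6)) : ℝ :=
  (-1 : ℝ) ^ (((T ×ˢ U).filter fun p => p.2 < p.1).card)

/-- The wedge (exterior) product in coordinates. -/
noncomputable def wedge (f h : Lam) : Lam := fun S =>
  ∑ T ∈ S.powerset, koszulSign T (S \ T) * f T * h (S \ T)

/-- The Chevalley–Eilenberg differential: the unique antiderivation with dαⁱ = g i,
given on the basis monomial α^S by d α^S = Σ_{i ∈ S} (−1)^{#{j ∈ S | j < i}} (g i) ∧ α^{S∖i}. -/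
noncomputable def ceDiff (g : Fin 6 → Lam) : Lam →ₗ[ℝ] Lam :=
  (Pi.basisFun ℝ (Finset (Fin 6))).constr ℝ fun S =>
    ∑ i ∈ S, ((-1 : ℝ) ^ ((S.filter fun j => j < i).card)) • wedge (g i) (gen (S.erase i))

/-- The subspace Λᵏ of homogeneous elements of degree `k`. -/
def degSub (k : ℕ) : Submodule ℝ Lam where
  carrier := {f | ∀ S : Finset (Fin 6), S.card ≠ k → f S = 0}
  add_mem' := by
    intro f g hf hg S hS
    simp only [Pi.add_apply, hf S hS, hg S hS, add_zero]
  zero_mem' := by intro S hS; rfl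
  smul_mem' := by
    intro c f hf S hS
    simp only [Pi.smul_apply, hf S hS, smul_zero]

/-- Closed k-forms. -/
noncomputable def Zspace (D : Lam →ₗ[ℝ] Lam) (k : ℕ) : Submodule ℝ Lam :=
  degSub k ⊓ LinearMap.ker D

/-- Exact k-forms. -/
noncomputable def Bspace (D : Lam →ₗ[ℝ] Lam) (k : ℕ) : Submodule ℝ Lam :=
  (degSub (k - 1)).map D

/-- Generator differentials of g̃ ≅ g_{3.1} ⊕ ℝ³: dα¹ = −α²⁶, all other dαⁱ = 0
(indices shifted down by one: αⁱ ↔ i−1). -/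
noncomputable def gDiff : Fin 6 → Lam := ![-gen {1, 5}, 0, 0, 0, 0, 0]


section Aux

lemma gen_apply (S T : Finset (Fin 6)) : gen S T = if T = S then 1 else 0 := by
  simp [gen, Pi.single_apply]

lemma gen_eq_basis (S : Finset (Fin 6)) : gen S = Pi.basisFun ℝ (Finset (Fin 6)) S := by
  simp [gen, Pi.basisFun_apply]

lemma koszulSign_ne_zero (T U : Finset (Fin 6)) : koszulSign T U ≠ 0 := by
  simp [koszulSign]

lemma wedge_gen_apply (T U V : Finset (Fin 6)) :
    wedge (gen T) (gen U) V = if T ⊆ V ∧ V \ T = U then koszulSign T U else 0 := by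
  unfold wedge
  have : ∀ T' ∈ V.powerset,
      koszulSign T' (V \ T') * gen T T' * gen U (V \ T')
      = if T' = T then (if V \ T = U then koszulSign T U else 0) else 0 := by
    intro T' _
    simp only [gen_apply]
    by_cases h1 : T' = T <;> by_cases h2 : V \ T' = U <;> simp [h1, h2] <;> simp_all
  rw [Finset.sum_congr rfl this]
  rw [Finset.sum_ite_eq' V.powerset T]
  simp only [Finset.mem_powerset]
  by_cases h1 : T ⊆ V <;> by_cases h2 : V \ T = U <;> simp [h1, h2]

lemma wedge_zero_left (h : Lam) : wedge 0 h = 0 := by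
  funext S; simp [wedge]

lemma wedge_neg_left (f h : Lam) : wedge (-f) h = -(wedge f h) := by
  funext S; simp [wedge, Finset.sum_neg_distrib]

lemma gDiff_ne_zero_apply (i : Fin 6) (hi : i ≠ 0) : gDiff i = 0 := by
  fin_cases i <;> first | rfl | simp_all [gDiff]

lemma D_gen (S : Finset (Fin 6)) :
    ceDiff gDiff (gen S) = if 0 ∈ S then -(wedge (gen {1,5}) (gen (S.erase 0))) else 0 := by
  rw [gen_eq_basis, ceDiff, Basis.constr_basis]
  by_cases h0 : (0 : Fin 6) ∈ S
  · rw [Finset.sum_eq_single_of_mem 0 h0]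
    · have : (S.filter fun j => j < (0:Fin 6)) = ∅ := by
        apply Finset.filter_false_of_mem; intro j _; exact fun hj => (Fin.not_lt_zero j) hj
      rw [this]
      simp only [Finset.card_empty, pow_zero, one_smul, if_pos h0]
      show wedge (gDiff 0) (gen (S.erase 0)) = _
      rw [show gDiff 0 = -gen {1,5} from rfl, wedge_neg_left]
    · intro i _ hi
      rw [gDiff_ne_zero_apply i hi, wedge_zero_left, smul_zero]
  · rw [if_neg h0]
    apply Finset.sum_eq_zero
    intro i hi
    rw [gDiff_ne_zero_apply i (by rintro rfl; exact h0 hi), wedge_zero_left, smul_zero]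

lemma cond_iff (S T : Finset (Fin 6)) :
    (0 ∈ S ∧ ({1,5} : Finset (Fin 6)) ⊆ T ∧ T \ {1,5} = S.erase 0) ↔
    ((0 ∉ T ∧ ({1,5} : Finset (Fin 6)) ⊆ T) ∧ S = insert 0 (T \ {1,5})) := by
  constructor
  · rintro ⟨h0, hsub, heq⟩
    have h0T : (0 : Fin 6) ∉ T := by
      intro h
      have : (0 : Fin 6) ∈ T \ {1,5} := by simp [Finset.mem_sdiff, h]
      rw [heq] at this
      exact (Finset.notMem_erase 0 S) this
    refine ⟨⟨h0T, hsub⟩, ?_⟩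
    rw [heq, Finset.insert_erase h0]
  · rintro ⟨⟨h0T, hsub⟩, rfl⟩
    have h0X : (0 : Fin 6) ∉ T \ {1,5} := fun h => h0T (Finset.mem_sdiff.mp h).1
    refine ⟨Finset.mem_insert_self _ _, hsub, ?_⟩
    rw [Finset.erase_insert h0X]

lemma f_rep (f : Lam) : f = ∑ S : Finset (Fin 6), f S • gen S := by
  funext V
  rw [Finset.sum_apply]
  simp only [Pi.smul_apply, gen_apply, smul_eq_mul, mul_ite, mul_one, mul_zero]
  rw [Finset.sum_ite_eq Finset.univ V f]
  simp

lemma D_apply (f : Lam) (T : Finset (Fin 6)) :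
    ceDiff gDiff f T =
      if 0 ∉ T ∧ ({1,5} : Finset (Fin 6)) ⊆ T then
        -koszulSign {1,5} (T \ {1,5}) * f (insert 0 (T \ {1,5})) else 0 := by
  conv_lhs => rw [f_rep f, map_sum]
  rw [Finset.sum_apply]
  have key : ∀ S : Finset (Fin 6),
      ceDiff gDiff (f S • gen S) T =
      if S = insert 0 (T \ {1,5}) then
        (if 0 ∉ T ∧ ({1,5} : Finset (Fin 6)) ⊆ T then
          -koszulSign {1,5} (T \ {1,5}) * f (insert 0 (T \ {1,5})) else 0) else 0 := by
    intro S
    rw [map_smul]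
    simp only [Pi.smul_apply, D_gen, smul_eq_mul]
    by_cases h0 : (0 : Fin 6) ∈ S
    · rw [if_pos h0]
      simp only [Pi.neg_apply, wedge_gen_apply]
      by_cases hc : ({1,5} : Finset (Fin 6)) ⊆ T ∧ T \ {1,5} = S.erase 0
      · have := (cond_iff S T).mp ⟨h0, hc⟩
        rw [if_pos hc, if_pos this.2, if_pos this.1]
        rw [← this.2, hc.2]
        ring
      · rw [if_neg hc]
        by_cases hS : S = insert 0 (T \ {1,5})
        · by_cases hT : (0 : Fin 6) ∉ T ∧ ({1,5} : Finset (Fin 6)) ⊆ T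
          · exact absurd ((cond_iff S T).mpr ⟨hT, hS⟩).2 hc
          · simp [hS, hT]
        · simp [hS]
    · rw [if_neg h0]
      simp only [Pi.zero_apply, mul_zero]
      by_cases hS : S = insert 0 (T \ {1,5})
      · exact absurd (hS ▸ Finset.mem_insert_self 0 _) h0
      · simp [hS]
  rw [Finset.sum_congr rfl (fun S _ => key S), Finset.sum_ite_eq' Finset.univ]
  simp

lemma mem_ker_iff (f : Lam) :
    ceDiff gDiff f = 0 ↔ ∀ S : Finset (Fin 6), 0 ∈ S → 1 ∉ S → 5 ∉ S → f S = 0 := by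
  constructor
  · intro h S h0 h1 h5
    set T : Finset (Fin 6) := S.erase 0 ∪ {1,5} with hT
    have hc1 : (0 : Fin 6) ∉ T := by
      intro h
      rcases Finset.mem_union.mp h with h | h
      · exact (Finset.notMem_erase 0 S) h
      · revert h; decide
    have hc2 : ({1,5} : Finset (Fin 6)) ⊆ T := Finset.subset_union_right
    have hTd : T \ {1,5} = S.erase 0 := by
      ext x
      simp only [hT, Finset.mem_sdiff, Finset.mem_union, Finset.mem_erase,
        Finset.mem_insert, Finset.mem_singleton]
      constructor
      · rintro ⟨h | h, hn⟩
        · exact h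
        · exact absurd h hn
      · intro hx
        refine ⟨Or.inl hx, ?_⟩
        rintro (rfl | rfl)
        · exact h1 hx.2
        · exact h5 hx.2
    have := congrFun h T
    rw [D_apply, if_pos ⟨hc1, hc2⟩, hTd, Finset.insert_erase h0] at this
    have hsign : -koszulSign {1,5} (S.erase 0) ≠ 0 := by
      simpa using koszulSign_ne_zero {1,5} (S.erase 0)
    simp only [Pi.zero_apply] at this
    exact (mul_eq_zero.mp this).resolve_left hsign
  · intro h
    funext T
    rw [D_apply]
    split_ifs with hc
    · have h1' : (1 : Fin 6) ∉ insert 0 (T \ {1,5}) := by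
        simp [Finset.mem_insert, Finset.mem_sdiff]
      have h5' : (5 : Fin 6) ∉ insert 0 (T \ {1,5}) := by
        simp [Finset.mem_insert, Finset.mem_sdiff]
      rw [h _ (Finset.mem_insert_self 0 _) h1' h5', mul_zero]
      rfl
    · rfl

/-- Span of a finite set of basis monomials. -/
noncomputable def genSpan (G : Finset (Finset (Fin 6))) : Submodule ℝ Lam :=
  Submodule.span ℝ (gen '' ↑G)

lemma finrank_genSpan (G : Finset (Finset (Fin 6))) : finrank ℝ (genSpan G) = G.card := by
  have hli : LinearIndependent ℝ (fun S : G => gen (S : Finset (Fin 6))) := by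
    have h2 := (Pi.basisFun ℝ (Finset (Fin 6))).linearIndependent.comp
      (fun S : G => (S : Finset (Fin 6))) Subtype.val_injective
    convert h2 using 1
    funext S
    rw [Function.comp_apply, gen_eq_basis]
  have hr : Set.range (fun S : G => gen (S : Finset (Fin 6))) = gen '' ↑G := by
    ext x
    simp [Set.mem_image]
  have hfr := finrank_span_eq_card hli
  rw [hr] at hfr
  rw [genSpan, hfr, Fintype.card_coe]

lemma Z_eq (k : ℕ) :
    Zspace (ceDiff gDiff) k
      = genSpan (Finset.univ.filter fun S => S.card = k ∧ (0 ∈ S → (1 ∈ S ∨ 5 ∈ S))) := by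
  apply le_antisymm
  · intro f hf
    obtain ⟨hdeg, hker⟩ := hf
    have hker' := (mem_ker_iff f).mp hker
    have hrep : f = ∑ S ∈ (Finset.univ.filter fun S : Finset (Fin 6) =>
        S.card = k ∧ (0 ∈ S → (1 ∈ S ∨ 5 ∈ S))), f S • gen S := by
      funext V
      rw [Finset.sum_apply]
      simp only [Pi.smul_apply, gen_apply, smul_eq_mul, mul_ite, mul_one, mul_zero]
      rw [Finset.sum_ite_eq]
      by_cases hV : V ∈ Finset.univ.filter fun S : Finset (Fin 6) =>
          S.card = k ∧ (0 ∈ S → (1 ∈ S ∨ 5 ∈ S))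
      · rw [if_pos hV]
      · rw [if_neg hV]
        simp only [Finset.mem_filter, Finset.mem_univ, true_and, not_and_or] at hV
        rcases hV with h | h
        · exact hdeg V h
        · push_neg at h
          exact hker' V h.1 h.2.1 h.2.2
    rw [hrep]
    apply Submodule.sum_mem
    intro S hS
    exact Submodule.smul_mem _ _ (Submodule.subset_span ⟨S, by simpa using hS, rfl⟩)
  · rw [genSpan, Submodule.span_le]
    rintro x ⟨S, hS, rfl⟩
    simp only [Finset.coe_filter, Set.mem_setOf_eq, Finset.mem_univ, true_and] at hS
    refine Submodule.mem_inf.mpr ⟨?_, ?_⟩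
    · intro V hV
      rw [gen_apply, if_neg]
      rintro rfl
      exact hV hS.1
    · rw [LinearMap.mem_ker, mem_ker_iff]
      intro S' h0 h1 h5
      rw [gen_apply, if_neg]
      rintro rfl
      rcases hS.2 h0 with h | h
      · exact h1 h
      · exact h5 h

lemma sdiff_inj {V T : Finset (Fin 6)} (hV : ({1,5} : Finset (Fin 6)) ⊆ V)
    (hT : ({1,5} : Finset (Fin 6)) ⊆ T) (h : V \ {1,5} = T \ {1,5}) : V = T := by
  ext x
  by_cases hx : x ∈ ({1,5} : Finset (Fin 6))
  · simp [hV hx, hT hx]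
  · constructor
    · intro hxV
      have : x ∈ V \ {1,5} := Finset.mem_sdiff.mpr ⟨hxV, hx⟩
      rw [h] at this
      exact (Finset.mem_sdiff.mp this).1
    · intro hxT
      have : x ∈ T \ {1,5} := Finset.mem_sdiff.mpr ⟨hxT, hx⟩
      rw [← h] at this
      exact (Finset.mem_sdiff.mp this).1

lemma card_insert_sdiff {T : Finset (Fin 6)} (h0 : (0 : Fin 6) ∉ T)
    (hsub : ({1,5} : Finset (Fin 6)) ⊆ T) :
    (insert 0 (T \ {1,5})).card = T.card - 1 := by
  have h0' : (0 : Fin 6) ∉ T \ {1,5} := fun h => h0 (Finset.mem_sdiff.mp h).1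
  rw [Finset.card_insert_of_notMem h0', Finset.card_sdiff_of_subset hsub]
  have h2 : ({1,5} : Finset (Fin 6)).card = 2 := by decide
  have hle : 2 ≤ T.card := h2 ▸ Finset.card_le_card hsub
  omega

lemma B_eq (k : ℕ) (hk : 1 ≤ k) :
    Bspace (ceDiff gDiff) k
      = genSpan (Finset.univ.filter fun T : Finset (Fin 6) =>
          T.card = k ∧ 0 ∉ T ∧ 1 ∈ T ∧ 5 ∈ T) := by
  apply le_antisymm
  · rintro x ⟨h, hh, rfl⟩
    have hrep : ceDiff gDiff h = ∑ T ∈ (Finset.univ.filter fun T : Finset (Fin 6) =>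
        T.card = k ∧ 0 ∉ T ∧ 1 ∈ T ∧ 5 ∈ T), (ceDiff gDiff h) T • gen T := by
      funext V
      rw [Finset.sum_apply]
      simp only [Pi.smul_apply, gen_apply, smul_eq_mul, mul_ite, mul_one, mul_zero]
      rw [Finset.sum_ite_eq]
      by_cases hV : V ∈ Finset.univ.filter fun T : Finset (Fin 6) =>
          T.card = k ∧ 0 ∉ T ∧ 1 ∈ T ∧ 5 ∈ T
      · rw [if_pos hV]
      · rw [if_neg hV]
        simp only [Finset.mem_filter, Finset.mem_univ, true_and, not_and_or] at hV
        rw [D_apply]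
        split_ifs with hc
        · have hsub : ({1,5} : Finset (Fin 6)) ⊆ V := hc.2
        
          have h1V : (1 : Fin 6) ∈ V := hsub (by decide)
          have h5V : (5 : Fin 6) ∈ V := hsub (by decide)
          have hcard : V.card ≠ k := by
            rcases hV with h | h | h | h
            · exact h
            · exact absurd hc.1 (not_not.mpr (by exact not_not.mp (fun _ => h hc.1))) 
            · exact absurd h1V h
            · exact absurd h5V h
          have := hh (insert 0 (V \ {1,5})) ?_
          · rw [this, mul_zero]
          · rw [card_insert_sdiff hc.1 hsub]
            have h2 : ({1,5} : Finset (Fin 6)).card = 2 := by decide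
            have hle : 2 ≤ V.card := h2 ▸ Finset.card_le_card hsub
            omega
        · rfl
    rw [hrep]
    apply Submodule.sum_mem
    intro T hT
    exact Submodule.smul_mem _ _ (Submodule.subset_span ⟨T, by simpa using hT, rfl⟩)
  · rw [genSpan, Submodule.span_le]
    rintro x ⟨T, hT, rfl⟩
    simp only [Finset.coe_filter, Set.mem_setOf_eq, Finset.mem_univ, true_and] at hT
    obtain ⟨hcard, h0T, h1T, h5T⟩ := hT
    have hsub : ({1,5} : Finset (Fin 6)) ⊆ T := by
      intro x hx
      simp only [Finset.mem_insert, Finset.mem_singleton] at hx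
      rcases hx with rfl | rfl
      · exact h1T
      · exact h5T
    set c : ℝ := -koszulSign {1,5} (T \ {1,5}) with hc
    have hcne : c ≠ 0 := by simpa [hc] using koszulSign_ne_zero {1,5} (T \ {1,5})
    refine ⟨c⁻¹ • gen (insert 0 (T \ {1,5})), ?_, ?_⟩
    · intro V hV
      simp only [Pi.smul_apply, gen_apply, smul_eq_mul]
      rw [if_neg, mul_zero]
      rintro rfl
      rw [card_insert_sdiff h0T hsub] at hV
      omega
    · funext V
      rw [map_smul]
      simp only [Pi.smul_apply, smul_eq_mul]
      rw [D_apply]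
      by_cases hcV : (0 : Fin 6) ∉ V ∧ ({1,5} : Finset (Fin 6)) ⊆ V
      · rw [if_pos hcV]
        simp only [Pi.smul_apply, gen_apply, smul_eq_mul]
        by_cases hVT : V = T
        · subst hVT
          rw [if_pos rfl, mul_one, ← hc, if_pos rfl]
          exact inv_mul_cancel₀ hcne
        · rw [if_neg, if_neg hVT]
          · ring
          · intro heq
            apply hVT
            apply sdiff_inj hcV.2 hsub
            have h0V' : (0 : Fin 6) ∉ V \ {1,5} := fun h => hcV.1 (Finset.mem_sdiff.mp h).1
            have h0T' : (0 : Fin 6) ∉ T \ {1,5} := fun h => h0T (Finset.mem_sdiff.mp h).1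
            have := congrArg (fun s => Finset.erase s 0) heq
            simpa [Finset.erase_insert h0V', Finset.erase_insert h0T'] using this
      · rw [if_neg hcV, gen_apply, if_neg (fun hVT : V = T => hcV (hVT ▸ ⟨h0T, hsub⟩))]
        ring

end Aux

theorem betti_g31_oplus_R3 :
    finrank ℝ (Zspace (ceDiff gDiff) 1) = finrank ℝ (Bspace (ceDiff gDiff) 1) + 5 ∧
    finrank ℝ (Zspace (ceDiff gDiff) 2) = finrank ℝ (Bspace (ceDiff gDiff) 2) + 11 ∧
    finrank ℝ (Zspace (ceDiff gDiff) 3) = finrank ℝ (Bspace (ceDiff gDiff) 3) + 14 := by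
  have hZ1 := Z_eq 1
  have hZ2 := Z_eq 2
  have hZ3 := Z_eq 3
  have hB1 := B_eq 1 (by norm_num)
  have hB2 := B_eq 2 (by norm_num)
  have hB3 := B_eq 3 (by norm_num)
  rw [hZ1, hZ2, hZ3, hB1, hB2, hB3]
  rw [finrank_genSpan, finrank_genSpan, finrank_genSpan, finrank_genSpan,
    finrank_genSpan, finrank_genSpan]
  refine ⟨?_, ?_, ?_⟩
  · have h1 : (Finset.univ.filter fun S : Finset (Fin 6) =>
        S.card = 1 ∧ (0 ∈ S → (1 ∈ S ∨ 5 ∈ S))).card = 5 := by decide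
    have h2 : (Finset.univ.filter fun T : Finset (Fin 6) =>
        T.card = 1 ∧ 0 ∉ T ∧ 1 ∈ T ∧ 5 ∈ T).card = 0 := by decide
    rw [h1, h2]
  · have h1 : (Finset.univ.filter fun S : Finset (Fin 6) =>
        S.card = 2 ∧ (0 ∈ S → (1 ∈ S ∨ 5 ∈ S))).card = 12 := by decide
    have h2 : (Finset.univ.filter fun T : Finset (Fin 6) =>
        T.card = 2 ∧ 0 ∉ T ∧ 1 ∈ T ∧ 5 ∈ T).card = 1 := by decide
    rw [h1, h2]
  · have h1 : (Finset.univ.filter fun S : Finset (Fin 6) =>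
        S.card = 3 ∧ (0 ∈ S → (1 ∈ S ∨ 5 ∈ S))).card = 17 := by decide
    have h2 : (Finset.univ.filter fun T : Finset (Fin 6) =>
        T.card = 3 ∧ 0 ∉ T ∧ 1 ∈ T ∧ 5 ∈ T).card = 3 := by decide
    rw [h1, h2]
end
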